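/- Let R^0, R^1, …, R^n be subsets with R^t ⊆ {0,1,…,t}, 0 ∈ R^t, and R^t ∩ {0,…,t−1} ⊆ R^{t−1} for every t ≥ 1 (once an index is forgotten it stays forgotten). Define r(0) = 0 and, for t = 1,…,n+1, r(t) = min{ r(i) + W(t−1) − W(i) : i ∈ R^{t−1} and σ(i) ⊲ σ(t) }. Let C ⊆ {1,…,n} be (the index set of) a σ-path, write C̄ = {1,…,n} ∖ C, let F^t = {1,…,t} ∖ R^t, and call an index i ∈ C unsafe if there is a time t with i ≤ t ≤ n such that C ∩ [i,t] ⊆ F^t; let U denote the set of unsafe indices. Then r(n+1) ≤ w(C̄ ∪ U). -/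

import Mathlib

open scoped Classical

/-- The weight `W(t) = w(1) + ⋯ + w(t)` (so `W 0 = 0`). -/
def Wsum (w : ℕ → ℕ) (t : ℕ) : ℕ := ∑ j ∈ Finset.Icc 1 t, w j

/-- The arc relation of the extended sequence: the sentinel `0` is below every index
`1 ≤ t ≤ n+1`, every index `1 ≤ i ≤ n` is below the sentinel `n+1`, and for indices
`1 ≤ i, t ≤ n` we have an arc iff `σ i ⊲ σ t` in the partial order `P`. -/
def Arr {P : Type*} [PartialOrder P] (n : ℕ) (σ : ℕ → P) (i t : ℕ) : Prop :=
  (i = 0 ∧ 1 ≤ t ∧ t ≤ n + 1) ∨ (1 ≤ i ∧ i ≤ n ∧ t = n + 1) ∨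
    (1 ≤ i ∧ i ≤ n ∧ 1 ≤ t ∧ t ≤ n ∧ σ i < σ t)

/-- Index `i` is unsafe (w.r.t. the σ-path `C` and remembered sets `R`): there is a time
`t` with `i ≤ t ≤ n` such that every index of `C ∩ [i,t]` is forgotten by time `t`,
i.e. lies in `F^t = {1,…,t} ∖ R^t`. -/
def Unsafe (n : ℕ) (R : ℕ → Finset ℕ) (C : Finset ℕ) (i : ℕ) : Prop :=
  ∃ t, i ≤ t ∧ t ≤ n ∧ ∀ j ∈ C, i ≤ j → j ≤ t → j ∉ R t

lemma Wsum_mono (w : ℕ → ℕ) {a b : ℕ} (h : a ≤ b) : Wsum w a ≤ Wsum w b :=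
  Finset.sum_le_sum_of_subset (Finset.Icc_subset_Icc_right h)

lemma Wsum_add (w : ℕ → ℕ) {a b : ℕ} (h : a ≤ b) :
    Wsum w a + ∑ j ∈ Finset.Ioc a b, w j = Wsum w b := by
  unfold Wsum
  rw [show (1:ℕ) = 0 + 1 from rfl, Finset.Icc_add_one_left_eq_Ioc, Finset.Icc_add_one_left_eq_Ioc]
  exact Finset.sum_Ioc_consecutive _ (Nat.zero_le a) h

/-- Key lemma: if `s` is the sentinel `0` or a safe index of the path `C`, then for every
later index `j` that is on the path (or the sentinel `n+1`), the DP value satisfies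
`r j ≤ r s + (W (j-1) - W s)`. -/
lemma key_lemma {P : Type*} [PartialOrder P] (n : ℕ) (σ : ℕ → P) (w : ℕ → ℕ)
    (R : ℕ → Finset ℕ) (hR0 : ∀ t, t ≤ n → 0 ∈ R t)
    (r : ℕ → ℕ)
    (hr : ∀ t, 1 ≤ t → t ≤ n + 1 →
      r t = sInf {v : ℕ | ∃ i ∈ R (t - 1), Arr n σ i t ∧
        v = r i + (Wsum w (t - 1) - Wsum w i)})
    (C : Finset ℕ) (hC : C ⊆ Finset.Icc 1 n)
    (hCpath : ∀ i ∈ C, ∀ j ∈ C, i < j → σ i < σ j)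
    (s : ℕ) (hs : s = 0 ∨ (s ∈ C ∧ ¬ Unsafe n R C s)) :
    ∀ j, s < j → (j ∈ C ∨ j = n + 1) → r j ≤ r s + (Wsum w (j - 1) - Wsum w s) := by
  intro j
  induction j using Nat.strong_induction_on with
  | _ j IH =>
    intro hsj hj
    have hj1 : 1 ≤ j ∧ j ≤ n + 1 := by
      rcases hj with h | h
      · have := hC h; simp only [Finset.mem_Icc] at this; omega
      · omega
    have dp : ∀ i, i ∈ R (j - 1) → Arr n σ i j →
        r j ≤ r i + (Wsum w (j - 1) - Wsum w i) := by
      intro i hi harr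
      rw [hr j hj1.1 hj1.2]
      exact Nat.sInf_le ⟨i, hi, harr, rfl⟩
    rcases hs with rfl | ⟨hsC, hsafe⟩
    · exact dp 0 (hR0 _ (by omega)) (Or.inl ⟨rfl, hj1.1, hj1.2⟩)
    · have hsIcc := hC hsC
      simp only [Finset.mem_Icc] at hsIcc
      have hsafe' : ∃ j' ∈ C, s ≤ j' ∧ j' ≤ j - 1 ∧ j' ∈ R (j - 1) := by
        by_contra hcon
        push_neg at hcon
        exact hsafe ⟨j - 1, by omega, by omega, fun x hx h1 h2 => hcon x hx h1 h2⟩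
      obtain ⟨j', hj'C, hsj', hj'le, hj'R⟩ := hsafe'
      have hj'Icc := hC hj'C
      simp only [Finset.mem_Icc] at hj'Icc
      have arr : ∀ i, i ∈ C → i < j → Arr n σ i j := by
        intro i hiC hij
        have hiIcc := hC hiC
        simp only [Finset.mem_Icc] at hiIcc
        rcases hj with hjC | rfl
        · have hjIcc := hC hjC
          simp only [Finset.mem_Icc] at hjIcc
          exact Or.inr (Or.inr ⟨hiIcc.1, hiIcc.2, hjIcc.1, hjIcc.2, hCpath i hiC j hjC hij⟩)
        · exact Or.inr (Or.inl ⟨hiIcc.1, hiIcc.2, rfl⟩)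
      rcases eq_or_lt_of_le hsj' with rfl | hlt
      · exact dp s hj'R (arr s hsC hsj)
      · have h1 := IH j' (by omega) hlt (Or.inl hj'C)
        have h2 := dp j' hj'R (arr j' hj'C (by omega))
        have m1 : Wsum w s ≤ Wsum w (j' - 1) := Wsum_mono w (by omega)
        have m2 : Wsum w (j' - 1) ≤ Wsum w j' := Wsum_mono w (by omega)
        have m3 : Wsum w j' ≤ Wsum w (j - 1) := Wsum_mono w (by omega)
        omega

/-- For every safe index `s` of the path (or the sentinel `n+1`), the DP value satisfies
`r s ≤ ∑_{j ∈ [1, s-1] \ Safe} w j`. -/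
lemma claim_lemma {P : Type*} [PartialOrder P] (n : ℕ) (σ : ℕ → P) (w : ℕ → ℕ)
    (R : ℕ → Finset ℕ) (hR0 : ∀ t, t ≤ n → 0 ∈ R t)
    (r : ℕ → ℕ) (hr0 : r 0 = 0)
    (hr : ∀ t, 1 ≤ t → t ≤ n + 1 →
      r t = sInf {v : ℕ | ∃ i ∈ R (t - 1), Arr n σ i t ∧
        v = r i + (Wsum w (t - 1) - Wsum w i)})
    (C : Finset ℕ) (hC : C ⊆ Finset.Icc 1 n)
    (hCpath : ∀ i ∈ C, ∀ j ∈ C, i < j → σ i < σ j) :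
    ∀ s, (s ∈ C.filter (fun i => ¬ Unsafe n R C i) ∨ s = n + 1) →
      r s ≤ ∑ j ∈ Finset.Icc 1 (s - 1) \ C.filter (fun i => ¬ Unsafe n R C i), w j := by
  intro s
  induction s using Nat.strong_induction_on with
  | _ s IH =>
    intro hs
    set Sf := C.filter (fun i => ¬ Unsafe n R C i) with hSfdef
    have hsC' : s ∈ C ∨ s = n + 1 := by
      rcases hs with h | h
      · exact Or.inl (Finset.mem_filter.mp h).1
      · exact Or.inr h
    have hs1 : 1 ≤ s := by
      rcases hsC' with h | h
      · have := hC h; simp only [Finset.mem_Icc] at this; omega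
      · omega
    by_cases hne : (Sf.filter (· < s)).Nonempty
    · set m := (Sf.filter (· < s)).max' hne with hmdef
      have hmmem := (Sf.filter (· < s)).max'_mem hne
      rw [Finset.mem_filter] at hmmem
      obtain ⟨hmSf, hms⟩ := hmmem
      have hmC : m ∈ C := (Finset.mem_filter.mp hmSf).1
      have hmsafe : ¬ Unsafe n R C m := (Finset.mem_filter.mp hmSf).2
      have hmIcc := hC hmC
      simp only [Finset.mem_Icc] at hmIcc
      have hkey := key_lemma n σ w R hR0 r hr C hC hCpath m
        (Or.inr ⟨hmC, hmsafe⟩) s hms hsC'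
      have hIH := IH m hms (Or.inl hmSf)
      have hadd := Wsum_add w (show m ≤ s - 1 by omega)
      have hdisj : Disjoint (Finset.Icc 1 (m - 1) \ Sf) (Finset.Ioc m (s - 1)) := by
        rw [Finset.disjoint_left]
        intro x hx hx'
        simp only [Finset.mem_sdiff, Finset.mem_Icc, Finset.mem_Ioc] at hx hx'
        omega
      have hsub : (Finset.Icc 1 (m - 1) \ Sf) ∪ Finset.Ioc m (s - 1) ⊆
          Finset.Icc 1 (s - 1) \ Sf := by
        intro x hx
        simp only [Finset.mem_union, Finset.mem_sdiff, Finset.mem_Icc, Finset.mem_Ioc] at hx ⊢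
        rcases hx with ⟨⟨h1, h2⟩, h3⟩ | ⟨h1, h2⟩
        · exact ⟨⟨h1, by omega⟩, h3⟩
        · refine ⟨⟨by omega, h2⟩, fun hxSf => ?_⟩
          have : x ≤ m := Finset.le_max' _ x (Finset.mem_filter.mpr ⟨hxSf, by omega⟩)
          omega
      have hsum : ∑ j ∈ (Finset.Icc 1 (m - 1) \ Sf) ∪ Finset.Ioc m (s - 1), w j
          ≤ ∑ j ∈ Finset.Icc 1 (s - 1) \ Sf, w j :=
        Finset.sum_le_sum_of_subset hsub
      rw [Finset.sum_union hdisj] at hsum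
      omega
    · have hkey := key_lemma n σ w R hR0 r hr C hC hCpath 0 (Or.inl rfl) s
        (by omega) hsC'
      have hW0 : Wsum w 0 = 0 := by simp [Wsum]
      have hset : Finset.Icc 1 (s - 1) \ Sf = Finset.Icc 1 (s - 1) := by
        ext x
        simp only [Finset.mem_sdiff, Finset.mem_Icc]
        constructor
        · tauto
        · intro hx
          refine ⟨hx, fun hxSf => hne ⟨x, Finset.mem_filter.mpr ⟨hxSf, by omega⟩⟩⟩
      rw [hset]
      have : Wsum w (s - 1) = ∑ j ∈ Finset.Icc 1 (s - 1), w j := rfl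
      omega

/-- With remembered sets `R^t ⊆ {0,…,t}`, `0 ∈ R^t`, satisfying
`R^t ∩ {0,…,t-1} ⊆ R^{t-1}` (a forgotten index stays forgotten), and `r` the restricted
dynamic program, for any σ-path `C ⊆ {1,…,n}` with unsafe set `U`, the output satisfies
`r (n+1) ≤ w(C̄ ∪ U)`. -/
theorem restricted_dp_le_offpath_plus_unsafe {P : Type*} [PartialOrder P] (n : ℕ)
    (σ : ℕ → P) (w : ℕ → ℕ) (hw : w (n + 1) = 0)
    (R : ℕ → Finset ℕ)
    (hRsub : ∀ t, t ≤ n → R t ⊆ Finset.range (t + 1))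
    (hR0 : ∀ t, t ≤ n → 0 ∈ R t)
    (hRmono : ∀ t, 1 ≤ t → t ≤ n → R t ∩ Finset.range t ⊆ R (t - 1))
    (r : ℕ → ℕ) (hr0 : r 0 = 0)
    (hr : ∀ t, 1 ≤ t → t ≤ n + 1 →
      r t = sInf {v : ℕ | ∃ i ∈ R (t - 1), Arr n σ i t ∧
        v = r i + (Wsum w (t - 1) - Wsum w i)})
    (C : Finset ℕ) (hC : C ⊆ Finset.Icc 1 n)
    (hCpath : ∀ i ∈ C, ∀ j ∈ C, i < j → σ i < σ j) :
    r (n + 1) ≤ ∑ j ∈ (Finset.Icc 1 n \ C) ∪ C.filter (Unsafe n R C), w j := by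
  have h := claim_lemma n σ w R hR0 r hr0 hr C hC hCpath (n + 1) (Or.inr rfl)
  simp only [Nat.add_sub_cancel] at h
  have hset : Finset.Icc 1 n \ C.filter (fun i => ¬ Unsafe n R C i)
      = (Finset.Icc 1 n \ C) ∪ C.filter (Unsafe n R C) := by
    ext x
    simp only [Finset.mem_sdiff, Finset.mem_union, Finset.mem_filter]
    constructor
    · rintro ⟨hx, hx2⟩
      by_cases hxC : x ∈ C
      · exact Or.inr ⟨hxC, by tauto⟩
      · exact Or.inl ⟨hx, hxC⟩
    · rintro (⟨hx, hxC⟩ | ⟨hxC, hxU⟩)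
      · exact ⟨hx, by tauto⟩
      · exact ⟨hC hxC, by tauto⟩
  rw [hset] at h
  exact h
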